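/- Let n ∈ ℕ, let f : Bool^n → Bool, and let X ∈ IS_br be an instruction sequence that computes f. Then there exists an instruction sequence Y ∈ IS_br in which no primitive instruction contains the basic instruction out.set:false, such that Y computes f and psize(Y) ≤ 3·psize(X). -/

import Mathlib

/-- Boolean register names: `inp i` is input register `in:(i+1)`,
`aux i` is auxiliary register `aux:(i+1)`, `out` is the output register. -/
inductive Reg where
  | inp : ℕ → Reg
  | aux : ℕ → Reg
  | out : Reg
deriving DecidableEq

/-- Basic instructions: register reads/writes, and (for splitting instruction
sequences) `split p` and `reply p` for Boolean parameters `p`. -/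
inductive BInstr where
  | get : Reg → BInstr
  | set : Reg → Bool → BInstr
  | split : ℕ → BInstr
  | reply : ℕ → BInstr
deriving DecidableEq

/-- Primitive instructions. -/
inductive PInstr where
  | plain : BInstr → PInstr
  | pos : BInstr → PInstr
  | neg : BInstr → PInstr
  | jump : ℕ → PInstr
  | halt : PInstr
deriving DecidableEq

abbrev RegState := Reg → Bool

/-- State change caused by processing a basic instruction. -/
def BInstr.effect : BInstr → RegState → RegState
  | .set r b, s => Function.update s r b
  | _, s => s

/-- Reply produced by processing a basic instruction. -/
def BInstr.rpl : BInstr → RegState → Bool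
  | .get r, s => s r
  | .set _ b, _ => b
  | _, _ => false

def BInstr.isSplitReply : BInstr → Bool
  | .split _ => true
  | .reply _ => true
  | _ => false

/-- Single-thread execution of an instruction sequence on Boolean registers;
`none` means deadlock, `some s` means termination in register state `s`.
(`split`/`reply` instructions make no sense here and deadlock.) -/
def exec : List PInstr → RegState → Option RegState
  | [], _ => none
  | .plain a :: X, s =>
      if a.isSplitReply then none else exec X (a.effect s)
  | .pos a :: X, s =>
      if a.isSplitReply then none
      else if a.rpl s then exec X (a.effect s) else exec (X.drop 1) (a.effect s)
  | .neg a :: X, s =>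
      if a.isSplitReply then none
      else if a.rpl s then exec (X.drop 1) (a.effect s) else exec X (a.effect s)
  | .jump 0 :: _, _ => none
  | .jump (l+1) :: X, s => exec (X.drop l) s
  | .halt :: _, s => some s
termination_by X _ => X.length
decreasing_by all_goals (simp only [List.length_drop, List.length_cons]; omega)

/-- Initial register state: input registers `in:1 .. in:n` contain
`b 0, ..., b (n-1)`; all other registers contain `false`. -/
def initState (n : ℕ) (b : Fin n → Bool) : RegState := fun r =>
  match r with
  | .inp i => if h : i < n then b ⟨i, h⟩ else false
  | _ => false

/-- `X` computes the `n`-ary Boolean function `f`: for every input, execution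
terminates (does not deadlock) with the output register containing `f b`. -/
def Computes {n : ℕ} (f : (Fin n → Bool) → Bool) (X : List PInstr) : Prop :=
  ∀ b : Fin n → Bool, ∃ s : RegState,
    exec X (initState n b) = some s ∧ s Reg.out = f b

/-- Basic instructions allowed in `IS_br`. -/
def BrBasic : BInstr → Prop
  | .get (.inp _) => True
  | .get (.aux _) => True
  | .set (.aux _) _ => True
  | .set .out _ => True
  | _ => False

/-- Basic instructions allowed in `IS_br^na`. -/
def NaBasic : BInstr → Prop
  | .get (.inp _) => True
  | .set .out _ => True
  | _ => False

def InstrBasicOK (P : BInstr → Prop) : PInstr → Prop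
  | .plain a => P a
  | .pos a => P a
  | .neg a => P a
  | _ => True

/-- Membership of `IS_br` (non-empty, only allowed basic instructions). -/
def ISbr (X : List PInstr) : Prop :=
  X ≠ [] ∧ ∀ u ∈ X, InstrBasicOK BrBasic u

/-- Membership of `IS_br^na`. -/
def ISbrna (X : List PInstr) : Prop :=
  X ≠ [] ∧ ∀ u ∈ X, InstrBasicOK NaBasic u

/-- The primitive instruction contains the basic instruction `out.set:false`. -/
def UsesOutSetFalse : PInstr → Prop
  | .plain (.set .out false) => True
  | .pos (.set .out false) => True
  | .neg (.set .out false) => True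
  | _ => False

/-- The class PLIS of Boolean function families computable by
polynomial-length instruction sequences from `IS_br`. -/
def PLIS (F : (n : ℕ) → (Fin n → Bool) → Bool) : Prop :=
  ∃ h : Polynomial ℕ, ∀ n : ℕ, ∃ X : List PInstr,
    ISbr X ∧ Computes (F n) X ∧ X.length ≤ h.eval n

namespace St4

/-- Substitute `out` writes by writes to `aux m`. -/
def subB (m : ℕ) : BInstr → BInstr
  | .set .out b => .set (.aux m) b
  | a => a

/-- Block translation of a primitive instruction. -/
def blk (m : ℕ) : PInstr → List PInstr
  | .plain a => [.plain (subB m a), .jump 2, .jump 0]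
  | .pos a => [.pos (subB m a), .jump 2, .jump 4]
  | .neg a => [.neg (subB m a), .jump 2, .jump 4]
  | .jump l => [.jump (3*l), .jump 0, .jump 0]
  | .halt => [.pos (.get (.aux m)), .plain (.set .out true), .halt]

def tr (m : ℕ) : List PInstr → List PInstr
  | [] => []
  | u :: X => blk m u ++ tr m X

/-- State translation: `out` is shadowed in `aux m`. -/
def sig (m : ℕ) (s : RegState) : RegState := fun r =>
  match r with
  | .aux i => if i = m then s .out else s (.aux i)
  | .out => false
  | r => s r

/-- Basic instructions allowed with fresh index `m`. -/
def BOK (m : ℕ) : BInstr → Prop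
  | .get (.inp _) => True
  | .get (.aux i) => i ≠ m
  | .set (.aux i) _ => i ≠ m
  | .set .out _ => True
  | _ => False

lemma blk_length (m : ℕ) (u : PInstr) : (blk m u).length = 3 := by
  cases u <;> simp [blk]

lemma tr_length (m : ℕ) (X : List PInstr) : (tr m X).length = 3 * X.length := by
  induction X with
  | nil => simp [tr]
  | cons u X ih => simp [tr, blk_length, ih]; ring

lemma drop3 (a b c : PInstr) (l : List PInstr) (k : ℕ) :
    (a :: b :: c :: l).drop (k + 3) = l.drop k := by
  show (a :: b :: c :: l).drop (k + 1 + 1 + 1) = l.drop k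
  simp [List.drop_succ_cons]

lemma tr_drop (m : ℕ) (k : ℕ) (X : List PInstr) :
    tr m (X.drop k) = (tr m X).drop (3 * k) := by
  induction k generalizing X with
  | zero => simp
  | succ k ih =>
    cases X with
    | nil => simp [tr]
    | cons u X =>
      have h3 : 3 * (k + 1) = 3 * k + 3 := by ring
      rw [h3]
      cases u <;>
        simp only [blk, tr, List.cons_append, List.nil_append, List.drop_succ_cons,
          drop3] <;> exact ih X

lemma subB_not_splitReply (m : ℕ) (a : BInstr) (h : BOK m a) :
    (subB m a).isSplitReply = false := by
  cases a with
  | get r => cases r <;> simp [subB, BInstr.isSplitReply]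
  | set r b => cases r <;> simp [subB, BInstr.isSplitReply]
  | split p => exact absurd h (by simp [BOK])
  | reply p => exact absurd h (by simp [BOK])

lemma not_splitReply (m : ℕ) (a : BInstr) (h : BOK m a) :
    a.isSplitReply = false := by
  cases a with
  | get r => simp [BInstr.isSplitReply]
  | set r b => simp [BInstr.isSplitReply]
  | split p => exact absurd h (by simp [BOK])
  | reply p => exact absurd h (by simp [BOK])

lemma subB_rpl (m : ℕ) (a : BInstr) (h : BOK m a) (s : RegState) :
    (subB m a).rpl (sig m s) = a.rpl s := by
  cases a with
  | get r =>
    cases r with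
    | inp i => simp [subB, BInstr.rpl, sig]
    | aux i =>
      have hi : i ≠ m := h
      simp [subB, BInstr.rpl, sig, hi]
    | out => exact absurd h (by simp [BOK])
  | set r b => cases r <;> simp [subB, BInstr.rpl]
  | split p => exact absurd h (by simp [BOK])
  | reply p => exact absurd h (by simp [BOK])

lemma subB_effect (m : ℕ) (a : BInstr) (h : BOK m a) (s : RegState) :
    (subB m a).effect (sig m s) = sig m (a.effect s) := by
  cases a with
  | get r => cases r <;> simp [subB, BInstr.effect]
  | set r b =>
    funext r'
    cases r with
    | inp i => exact absurd h (by simp [BOK])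
    | aux i =>
      have hi : i ≠ m := h
      cases r' with
      | inp j => simp [subB, BInstr.effect, sig, Function.update]
      | aux j =>
        by_cases hji : j = i <;>
          simp [subB, BInstr.effect, sig, Function.update, hji, hi, Ne.symm hi]
      | out => simp [subB, BInstr.effect, sig, Function.update]
    | out =>
      cases r' with
      | inp j => simp [subB, BInstr.effect, sig, Function.update]
      | aux j =>
        by_cases hj : j = m <;>
          simp [subB, BInstr.effect, sig, Function.update, hj]
      | out => simp [subB, BInstr.effect, sig, Function.update]
  | split p => exact absurd h (by simp [BOK])
  | reply p => exact absurd h (by simp [BOK])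

/-- Simulation lemma. -/
lemma sim (m : ℕ) (X : List PInstr) (s sf : RegState)
    (hok : ∀ u ∈ X, InstrBasicOK (BOK m) u)
    (he : exec X s = some sf) :
    ∃ t, exec (tr m X) (sig m s) = some t ∧ t .out = sf .out := by
  match X with
  | [] => simp [exec] at he
  | .plain a :: X2 =>
    have ha : BOK m a := hok _ List.mem_cons_self
    rw [exec, if_neg (by simp [not_splitReply m a ha])] at he
    obtain ⟨t, ht, hto⟩ := sim m X2 (a.effect s) sf (fun u hu => hok u (by simp [hu])) he
    refine ⟨t, ?_, hto⟩
    show exec (.plain (subB m a) :: .jump 2 :: .jump 0 :: tr m X2) (sig m s) = some t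
    rw [exec, if_neg (by simp [subB_not_splitReply m a ha])]
    show exec (.jump (1+1) :: _) _ = some t
    rw [exec]
    simpa [subB_effect m a ha] using ht
  | .pos a :: X2 =>
    have ha : BOK m a := hok _ List.mem_cons_self
    rw [exec, if_neg (by simp [not_splitReply m a ha])] at he
    have hok2 : ∀ u ∈ X2, InstrBasicOK (BOK m) u := fun u hu => hok u (by simp [hu])
    by_cases hr : a.rpl s = true
    · rw [if_pos hr] at he
      obtain ⟨t, ht, hto⟩ := sim m X2 (a.effect s) sf hok2 he
      refine ⟨t, ?_, hto⟩
      show exec (.pos (subB m a) :: .jump 2 :: .jump 4 :: tr m X2) (sig m s) = some t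
      rw [exec, if_neg (by simp [subB_not_splitReply m a ha]), subB_rpl m a ha, if_pos hr]
      show exec (.jump (1+1) :: _) _ = some t
      rw [exec]
      simpa [subB_effect m a ha] using ht
    · rw [if_neg hr] at he
      obtain ⟨t, ht, hto⟩ := sim m (X2.drop 1) (a.effect s) sf
        (fun u hu => hok2 u (List.mem_of_mem_drop hu)) he
      refine ⟨t, ?_, hto⟩
      show exec (.pos (subB m a) :: .jump 2 :: .jump 4 :: tr m X2) (sig m s) = some t
      rw [exec, if_neg (by simp [subB_not_splitReply m a ha]), subB_rpl m a ha, if_neg hr]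
      show exec (.jump (3+1) :: tr m X2) _ = some t
      rw [exec]
      rw [tr_drop] at ht
      simpa [subB_effect m a ha] using ht
  | .neg a :: X2 =>
    have ha : BOK m a := hok _ List.mem_cons_self
    rw [exec, if_neg (by simp [not_splitReply m a ha])] at he
    have hok2 : ∀ u ∈ X2, InstrBasicOK (BOK m) u := fun u hu => hok u (by simp [hu])
    by_cases hr : a.rpl s = true
    · rw [if_pos hr] at he
      obtain ⟨t, ht, hto⟩ := sim m (X2.drop 1) (a.effect s) sf
        (fun u hu => hok2 u (List.mem_of_mem_drop hu)) he
      refine ⟨t, ?_, hto⟩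
      show exec (.neg (subB m a) :: .jump 2 :: .jump 4 :: tr m X2) (sig m s) = some t
      rw [exec, if_neg (by simp [subB_not_splitReply m a ha]), subB_rpl m a ha, if_pos hr]
      show exec (.jump (3+1) :: tr m X2) _ = some t
      rw [exec]
      rw [tr_drop] at ht
      simpa [subB_effect m a ha] using ht
    · rw [if_neg hr] at he
      obtain ⟨t, ht, hto⟩ := sim m X2 (a.effect s) sf hok2 he
      refine ⟨t, ?_, hto⟩
      show exec (.neg (subB m a) :: .jump 2 :: .jump 4 :: tr m X2) (sig m s) = some t
      rw [exec, if_neg (by simp [subB_not_splitReply m a ha]), subB_rpl m a ha, if_neg hr]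
      show exec (.jump (1+1) :: _) _ = some t
      rw [exec]
      simpa [subB_effect m a ha] using ht
  | .jump 0 :: X2 => simp [exec] at he
  | .jump (l+1) :: X2 =>
    rw [exec] at he
    obtain ⟨t, ht, hto⟩ := sim m (X2.drop l) s sf
      (fun u hu => hok u (by simp [List.mem_of_mem_drop hu])) he
    refine ⟨t, ?_, hto⟩
    show exec (.jump (3*(l+1)) :: .jump 0 :: .jump 0 :: tr m X2) (sig m s) = some t
    have h3 : 3*(l+1) = (3*l+2)+1 := by ring
    rw [h3, exec]
    show exec ((.jump 0 :: .jump 0 :: tr m X2).drop (3*l+1+1)) _ = some t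
    rw [List.drop_succ_cons, List.drop_succ_cons, ← tr_drop]
    exact ht
  | .halt :: X2 =>
    rw [exec] at he
    injection he with he
    subst he
    by_cases ho : s .out = true
    · refine ⟨Function.update (sig m s) .out true, ?_, by simp [Function.update, ho]⟩
      show exec (.pos (.get (.aux m)) :: .plain (.set .out true) :: .halt :: tr m X2)
        (sig m s) = _
      rw [exec, if_neg (by simp [BInstr.isSplitReply])]
      have hg : (BInstr.get (.aux m)).rpl (sig m s) = true := by simp [BInstr.rpl, sig, ho]
      rw [hg, if_pos rfl]
      have hge : (BInstr.get (.aux m)).effect (sig m s) = sig m s := rfl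
      rw [hge, exec, if_neg (by simp [BInstr.isSplitReply])]
      rw [exec]
      rfl
    · have ho' : s .out = false := by simpa using ho
      refine ⟨sig m s, ?_, by simp [sig, ho']⟩
      show exec (.pos (.get (.aux m)) :: .plain (.set .out true) :: .halt :: tr m X2)
        (sig m s) = _
      rw [exec, if_neg (by simp [BInstr.isSplitReply])]
      have hg : (BInstr.get (.aux m)).rpl (sig m s) = false := by simp [BInstr.rpl, sig, ho']
      rw [hg, if_neg (by simp)]
      have hge : (BInstr.get (.aux m)).effect (sig m s) = sig m s := rfl
      rw [hge]
      show exec (.halt :: tr m X2) _ = _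
      rw [exec]
termination_by X.length
decreasing_by all_goals (simp only [List.length_drop, List.length_cons]; omega)
def auxIdxB : BInstr → ℕ
  | .get (.aux i) => i+1
  | .set (.aux i) _ => i+1
  | _ => 0

def auxIdxP : PInstr → ℕ
  | .plain a => auxIdxB a
  | .pos a => auxIdxB a
  | .neg a => auxIdxB a
  | _ => 0

def bound (X : List PInstr) : ℕ := X.foldr (fun u acc => max (auxIdxP u) acc) 0

lemma le_bound (X : List PInstr) : ∀ u ∈ X, auxIdxP u ≤ bound X := by
  induction X with
  | nil => simp
  | cons v X ih =>
    intro u hu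
    rcases List.mem_cons.mp hu with h | h
    · subst h; exact le_max_left _ _
    · exact le_trans (ih u h) (le_max_right _ _)

lemma br_to_bok (m : ℕ) (a : BInstr) (h : BrBasic a) (hb : auxIdxB a ≤ m) : BOK m a := by
  cases a with
  | get r =>
    cases r with
    | inp i => trivial
    | aux i =>
      have : i + 1 ≤ m := hb
      show i ≠ m
      omega
    | out => exact absurd h (by simp [BrBasic])
  | set r b =>
    cases r with
    | inp i => exact absurd h (by simp [BrBasic])
    | aux i =>
      have : i + 1 ≤ m := hb
      show i ≠ m
      omega
    | out => trivial
  | split p => exact absurd h (by simp [BrBasic])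
  | reply p => exact absurd h (by simp [BrBasic])

lemma instr_bok (m : ℕ) (u : PInstr) (h : InstrBasicOK BrBasic u) (hb : auxIdxP u ≤ m) :
    InstrBasicOK (BOK m) u := by
  cases u with
  | plain a => exact br_to_bok m a h hb
  | pos a => exact br_to_bok m a h hb
  | neg a => exact br_to_bok m a h hb
  | jump l => trivial
  | halt => trivial

lemma mem_tr (m : ℕ) (v : PInstr) (X : List PInstr) :
    v ∈ tr m X ↔ ∃ u ∈ X, v ∈ blk m u := by
  induction X with
  | nil => simp [tr]
  | cons u X ih => simp [tr, ih]

lemma subB_br (m : ℕ) (a : BInstr) (h : BrBasic a) : BrBasic (subB m a) := by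
  cases a with
  | get r => cases r <;> simpa [subB] using h
  | set r b =>
    cases r with
    | inp i => exact absurd h (by simp [BrBasic])
    | aux i => exact h
    | out => trivial
  | split p => exact absurd h (by simp [BrBasic])
  | reply p => exact absurd h (by simp [BrBasic])

lemma subB_ne (m : ℕ) (a : BInstr) : subB m a ≠ .set .out false := by
  cases a with
  | get r => simp [subB]
  | set r b => cases r <;> simp [subB]
  | split p => simp [subB]
  | reply p => simp [subB]

lemma blk_br (m : ℕ) (u : PInstr) (h : InstrBasicOK BrBasic u) :
    ∀ v ∈ blk m u, InstrBasicOK BrBasic v := by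
  intro v hv
  cases u <;> simp only [blk, List.mem_cons, List.not_mem_nil, or_false] at hv <;>
    rcases hv with h1 | h1 | h1 <;> subst h1 <;>
    first | exact subB_br m _ h | trivial

lemma noOSF_sub (m : ℕ) (a : BInstr) :
    ∀ w : BInstr → PInstr, (∀ c, w c = .plain c ∨ w c = .pos c ∨ w c = .neg c) →
    ¬ UsesOutSetFalse (w (subB m a)) := by
  intro w hw hc
  apply subB_ne m a
  rcases hw (subB m a) with h | h | h <;> rw [h] at hc <;>
  · cases hb : subB m a with
    | set r b =>
      rw [hb] at hc
      cases r <;> cases b <;> first | rfl | exact absurd hc (by simp [UsesOutSetFalse])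
    | get r => rw [hb] at hc; exact absurd hc (by simp [UsesOutSetFalse])
    | split p => rw [hb] at hc; exact absurd hc (by simp [UsesOutSetFalse])
    | reply p => rw [hb] at hc; exact absurd hc (by simp [UsesOutSetFalse])

lemma blk_noOSF (m : ℕ) (u : PInstr) : ∀ v ∈ blk m u, ¬ UsesOutSetFalse v := by
  intro v hv
  cases u <;> simp only [blk, List.mem_cons, List.not_mem_nil, or_false] at hv <;>
    rcases hv with h1 | h1 | h1 <;> subst h1 <;>
    first
    | exact noOSF_sub m _ (fun c => .plain c) (fun c => Or.inl rfl)
    | exact noOSF_sub m _ (fun c => .pos c) (fun c => Or.inr (Or.inl rfl))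
    | exact noOSF_sub m _ (fun c => .neg c) (fun c => Or.inr (Or.inr rfl))
    | simp [UsesOutSetFalse]

lemma sig_init (m n : ℕ) (b : Fin n → Bool) : sig m (initState n b) = initState n b := by
  funext r
  cases r with
  | inp i => rfl
  | aux i => by_cases h : i = m <;> simp [sig, initState, h]
  | out => rfl

end St4


/-- Theorem 4 of the paper: `out.set:false` can be eliminated at the cost of
at most a tripling of the length. -/
theorem statement4 (n : ℕ) (f : (Fin n → Bool) → Bool) (X : List PInstr)
    (hX : ISbr X) (hC : Computes f X) :
    ∃ Y : List PInstr, ISbr Y ∧ (∀ u ∈ Y, ¬ UsesOutSetFalse u) ∧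
      Computes f Y ∧ Y.length ≤ 3 * X.length := by
  obtain ⟨hne, hbr⟩ := hX
  set m := St4.bound X with hm
  have hok : ∀ u ∈ X, InstrBasicOK (St4.BOK m) u := fun u hu =>
    St4.instr_bok m u (hbr u hu) (St4.le_bound X u hu)
  refine ⟨St4.tr m X, ⟨?_, ?_⟩, ?_, ?_, ?_⟩
  · cases X with
    | nil => exact absurd rfl hne
    | cons u X2 =>
      have : (St4.tr m (u :: X2)).length = 3 * (u :: X2).length := St4.tr_length m _
      intro hc
      rw [hc] at this
      simp at this
  · intro v hv
    obtain ⟨u, hu, hvb⟩ := (St4.mem_tr m v X).mp hv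
    exact St4.blk_br m u (hbr u hu) v hvb
  · intro v hv
    obtain ⟨u, hu, hvb⟩ := (St4.mem_tr m v X).mp hv
    exact St4.blk_noOSF m u v hvb
  · intro b
    obtain ⟨s, hs, hso⟩ := hC b
    obtain ⟨t, ht, hto⟩ := St4.sim m X (initState n b) s hok hs
    rw [St4.sig_init] at ht
    exact ⟨t, ht, hto.trans hso⟩
  · rw [St4.tr_length]
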